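/- Let d be a positive integer and z₁, z₂ ∈ ℍ. Then the matrices Re w_d(z₁,z₂) and Im w_d(z₁,z₂) (entrywise real and imaginary parts) are linearly independent over ℝ in the space of real 2×2 matrices, and for every (α,β) ∈ ℝ² with (α,β) ≠ (0,0) one has d·det(α·Re w_d(z₁,z₂) + β·Im w_d(z₁,z₂)) < 0; moreover, with w̃ := w_d(z₁, z̄₂), one has d·det(α·Re w̃ + β·Im w̃) > 0 for all (α,β) ≠ (0,0). (Thus the plane spanned by Re w_d, Im w_d is a negative definite 2-plane for the form Q_d = d·det, and the plane spanned by Re w̃, Im w̃ is positive definite; this is the content of Proposition 2.1.) -/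
import Mathlib


open Matrix Complex

/-- The matrix `w_d(z₁,z₂) = (1/d)·[[z₁, −z₁z₂],[1, −z₂]]`. -/
noncomputable def wMat (d : ℕ) (z₁ z₂ : ℂ) : Matrix (Fin 2) (Fin 2) ℂ :=
  ((d : ℂ))⁻¹ • !![z₁, -z₁ * z₂; 1, -z₂]

lemma det_key (d : ℕ) (hd : 0 < d) (z₁ w : ℂ) (α β : ℝ) :
    (α • (wMat d z₁ w).map Complex.re + β • (wMat d z₁ w).map Complex.im).det
      = -((α^2+β^2) * z₁.im * w.im) / (d^2) := by
  have hd' : (d:ℝ) ≠ 0 := Nat.cast_ne_zero.mpr hd.ne'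
  simp [wMat, Matrix.det_fin_two, Matrix.map_apply, Complex.mul_re, Complex.mul_im,
    Complex.inv_re, Complex.inv_im, Complex.normSq_natCast]
  field_simp
  ring

/-- Proposition 2.1: `Re w_d(z₁,z₂)` and `Im w_d(z₁,z₂)` are linearly independent and span a
negative definite 2-plane for the quadratic form `Q_d = d·det`, while the real and imaginary
parts of `w̃ = w_d(z₁, z̄₂)` span a positive definite 2-plane. -/
theorem stmt_1 (d : ℕ) (hd : 0 < d) (z₁ z₂ : ℂ) (hz₁ : 0 < z₁.im) (hz₂ : 0 < z₂.im) :
    LinearIndependent ℝ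
      ![(wMat d z₁ z₂).map Complex.re, (wMat d z₁ z₂).map Complex.im] ∧
    (∀ α β : ℝ, ¬(α = 0 ∧ β = 0) →
      (d : ℝ) *
        (α • (wMat d z₁ z₂).map Complex.re + β • (wMat d z₁ z₂).map Complex.im).det < 0) ∧
    (∀ α β : ℝ, ¬(α = 0 ∧ β = 0) →
      0 < (d : ℝ) *
        (α • (wMat d z₁ (starRingEnd ℂ z₂)).map Complex.re
          + β • (wMat d z₁ (starRingEnd ℂ z₂)).map Complex.im).det) := by
  have hd' : (0:ℝ) < (d:ℝ) := Nat.cast_pos.mpr hd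
  have hsq : ∀ α β : ℝ, ¬(α = 0 ∧ β = 0) → 0 < α^2 + β^2 := by
    intro α β h
    rcases (not_and_or.mp h) with h | h
    · have := pow_pos (abs_pos.mpr h) 2
      nlinarith [sq_nonneg β, _root_.sq_abs α]
    · nlinarith [sq_nonneg α, _root_.sq_abs β, pow_pos (abs_pos.mpr h) 2]
  refine ⟨?_, ?_, ?_⟩
  · rw [LinearIndependent.pair_iff]
    intro α β hab
    by_contra h
    have h0 := det_key d hd z₁ z₂ α β
    rw [hab] at h0
    simp only [Matrix.det_zero] at h0
    have hpos := hsq α β (by tauto)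
    have hX : (0:ℝ) < ((α^2+β^2) * z₁.im * z₂.im) / (d^2 : ℝ) := by positivity
    rw [neg_div] at h0
    linarith
  · intro α β h
    rw [det_key d hd z₁ z₂ α β]
    have hpos := hsq α β h
    rw [neg_div, mul_neg, neg_lt_zero]
    positivity
  · intro α β h
    rw [det_key d hd z₁ (starRingEnd ℂ z₂) α β]
    have hpos := hsq α β h
    have him : (starRingEnd ℂ z₂).im = -z₂.im := Complex.conj_im z₂
    rw [him]
    have he : -((α^2+β^2) * z₁.im * -z₂.im) = (α^2+β^2) * z₁.im * z₂.im := by ring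
    rw [he]
    positivity
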